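/- Let K be a convex body in ℝⁿ and let λ ∈ [0,1]. Then ∫₀¹ vol_n((1−η)(1−λ)K + η(−λK)) dη ≤ vol_n(K)/(n+1), where the integrand is the volume of the Minkowski sum (1−η)(1−λ)K + η(λ(−K)). -/

import Mathlib

open MeasureTheory Set Pointwise

namespace Godbersen

noncomputable section

variable {n : ℕ} {K : Set (EuclideanSpace ℝ (Fin n))} {lam : ℝ}

lemma lintegral_pow_Icc (n : ℕ) {r : ℝ} (hr : 0 ≤ r) :
    ∫⁻ u in Icc (0:ℝ) r, ENNReal.ofReal ((1 + n) * u ^ n) = ENNReal.ofReal (r ^ (1 + n)) := by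
  rw [← ofReal_integral_eq_lintegral_ofReal]
  · congr 1
    rw [integral_Icc_eq_integral_Ioc, ← intervalIntegral.integral_of_le hr,
      intervalIntegral.integral_const_mul, integral_pow]
    have : ((n:ℝ) + 1) ≠ 0 := by positivity
    field_simp
    ring
  · exact (by continuity : Continuous fun u : ℝ => (1 + n) * u ^ n).integrableOn_Icc
  · filter_upwards [ae_restrict_mem measurableSet_Icc] with u hu
    exact mul_nonneg (by positivity) (pow_nonneg hu.1 n)

lemma ofReal_one_add_nat (n : ℕ) : ENNReal.ofReal ((1:ℝ) + n) = (n : ENNReal) + 1 := by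
  rw [show ((1:ℝ) + n) = ((n + 1 : ℕ) : ℝ) by push_cast; ring, ENNReal.ofReal_natCast]
  push_cast
  ring

lemma lintegral_pow_Icc01 (n : ℕ) :
    ∫⁻ u in Icc (0:ℝ) 1, ENNReal.ofReal (u ^ n) = ((n : ENNReal) + 1)⁻¹ := by
  have h := lintegral_pow_Icc n (le_refl (0:ℝ) |>.trans (by norm_num : (0:ℝ) ≤ 1))
  rw [one_pow] at h
  have heq : ∀ u ∈ Icc (0:ℝ) 1, ENNReal.ofReal ((1 + n) * u ^ n)
      = ((n : ENNReal) + 1) * ENNReal.ofReal (u ^ n) := by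
    intro u hu
    rw [ENNReal.ofReal_mul (by positivity), ofReal_one_add_nat]
  rw [setLIntegral_congr_fun measurableSet_Icc heq,
    lintegral_const_mul ((n : ENNReal) + 1) (by fun_prop)] at h
  have hne : ((n : ENNReal) + 1) ≠ 0 := by simp
  have hnt : ((n : ENNReal) + 1) ≠ ⊤ := by simp
  rw [ENNReal.ofReal_one] at h
  calc ∫⁻ u in Icc (0:ℝ) 1, ENNReal.ofReal (u ^ n)
      = ((n : ENNReal) + 1)⁻¹ * (((n : ENNReal) + 1) * ∫⁻ u in Icc (0:ℝ) 1, ENNReal.ofReal (u ^ n)) := by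
        rw [← mul_assoc, ENNReal.inv_mul_cancel hne hnt, one_mul]
    _ = ((n : ENNReal) + 1)⁻¹ := by rw [h, mul_one]

lemma lintegral_one_sub_pow_Icc01 (n : ℕ) :
    ∫⁻ u in Icc (0:ℝ) 1, ENNReal.ofReal ((1 - u) ^ n) = ((n : ENNReal) + 1)⁻¹ := by
  rw [← lintegral_pow_Icc01 n, ← ofReal_integral_eq_lintegral_ofReal, ← ofReal_integral_eq_lintegral_ofReal]
  · congr 1
    rw [integral_Icc_eq_integral_Ioc, integral_Icc_eq_integral_Ioc,
      ← intervalIntegral.integral_of_le (by norm_num : (0:ℝ) ≤ 1),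
      ← intervalIntegral.integral_of_le (by norm_num : (0:ℝ) ≤ 1)]
    simpa using intervalIntegral.integral_comp_sub_left (a := (0:ℝ)) (b := 1) (fun u => u ^ n) 1
  · exact (by continuity : Continuous fun u : ℝ => u ^ n).integrableOn_Icc
  · filter_upwards [ae_restrict_mem measurableSet_Icc] with u hu
    exact pow_nonneg hu.1 n
  · exact (by continuity : Continuous fun u : ℝ => (1 - u) ^ n).integrableOn_Icc
  · filter_upwards [ae_restrict_mem measurableSet_Icc] with u hu
    exact pow_nonneg (by linarith [hu.2]) n

def SS (K : Set (EuclideanSpace ℝ (Fin n))) (lam t : ℝ) : Set (EuclideanSpace ℝ (Fin n)) :=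
  ((1-t)*(1-lam)) • K + (t*lam) • (-K)

def CC (K : Set (EuclideanSpace ℝ (Fin n))) (lam : ℝ) : Set (ℝ × EuclideanSpace ℝ (Fin n)) :=
  {z | z.1 ∈ Icc (0:ℝ) 1 ∧ z.2 ∈ SS K lam z.1}

lemma scaled_graph_eq (K : Set (EuclideanSpace ℝ (Fin n))) (f : ℝ → ℝ) :
    {p : ℝ × EuclideanSpace ℝ (Fin n) | p.1 ∈ Icc (0:ℝ) 1 ∧ p.2 ∈ (f p.1) • K}
      = (fun w : ℝ × EuclideanSpace ℝ (Fin n) => (w.1, f w.1 • w.2)) '' (Icc (0:ℝ) 1 ×ˢ K) := by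
  ext ⟨t, y⟩
  simp only [mem_setOf_eq, mem_image, mem_prod, Prod.mk.injEq, Prod.exists]
  constructor
  · rintro ⟨ht, k, hk, hky⟩
    exact ⟨t, k, ⟨ht, hk⟩, rfl, hky⟩
  · rintro ⟨s, k, ⟨hs, hk⟩, rfl, hky⟩
    exact ⟨hs, k, hk, hky⟩

lemma isCompact_scaled_graph (hK : IsCompact K) {f : ℝ → ℝ} (hf : Continuous f) :
    IsCompact {p : ℝ × EuclideanSpace ℝ (Fin n) | p.1 ∈ Icc (0:ℝ) 1 ∧ p.2 ∈ (f p.1) • K} := by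
  rw [scaled_graph_eq]
  exact (isCompact_Icc.prod hK).image (by fun_prop)

lemma CC_eq_image (K : Set (EuclideanSpace ℝ (Fin n))) (lam : ℝ) :
    CC K lam = (fun w : ℝ × (EuclideanSpace ℝ (Fin n) × EuclideanSpace ℝ (Fin n)) =>
      (w.1, ((1-w.1)*(1-lam)) • w.2.1 + (w.1*lam) • (-w.2.2))) '' (Icc (0:ℝ) 1 ×ˢ K ×ˢ K) := by
  ext ⟨t, x⟩
  simp only [CC, SS, mem_setOf_eq, mem_image, mem_prod, Prod.mk.injEq, Prod.exists]
  constructor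
  · rintro ⟨ht, hx⟩
    obtain ⟨u, ⟨p, hp, hpu⟩, v, ⟨q', hq', hqv⟩, huv⟩ := hx
    refine ⟨t, p, -q', ⟨ht, hp, by simpa using hq'⟩, rfl, ?_⟩
    rw [← huv, ← hpu, ← hqv]
    simp
  · rintro ⟨s, p, q, ⟨hs, hp, hq⟩, rfl, hx⟩
    exact ⟨hs, _, smul_mem_smul_set hp, _, smul_mem_smul_set (Set.neg_mem_neg.2 hq), hx⟩

lemma isCompact_CC (hK : IsCompact K) : IsCompact (CC K lam) := by
  rw [CC_eq_image]
  exact (isCompact_Icc.prod (hK.prod hK)).image (by fun_prop)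

lemma measurableSet_CC (hK : IsCompact K) : MeasurableSet (CC K lam) :=
  (isCompact_CC hK).isClosed.measurableSet

lemma z₀_mem_CC (hne : K.Nonempty) (hlam : lam ∈ Icc (0:ℝ) 1) :
    ((1 - lam, 0) : ℝ × EuclideanSpace ℝ (Fin n)) ∈ CC K lam := by
  obtain ⟨k, hk⟩ := hne
  have h1 : (0:ℝ) ≤ 1 - lam := by linarith [hlam.2]
  have h2 : (1:ℝ) - lam ≤ 1 := by linarith [hlam.1]
  refine ⟨⟨h1, h2⟩, ?_⟩
  refine ⟨_, smul_mem_smul_set hk, _, smul_mem_smul_set (Set.neg_mem_neg.2 hk), ?_⟩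
  rw [smul_neg]
  rw [show (1-(1-lam))*(1-lam) = (1-lam)*lam by ring]
  exact sub_self _

lemma volume_CC (hK : IsCompact K) :
    volume (CC K lam) = ∫⁻ t in Icc (0:ℝ) 1, volume (SS K lam t) := by
  rw [Measure.volume_eq_prod, Measure.prod_apply (measurableSet_CC hK)]
  rw [← lintegral_indicator measurableSet_Icc]
  congr 1
  funext t
  by_cases ht : t ∈ Icc (0:ℝ) 1
  · rw [indicator_of_mem ht]
    congr 1
    ext x
    exact ⟨fun h => h.2, fun h => ⟨ht, h⟩⟩
  · rw [indicator_of_notMem ht]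
    have : Prod.mk t ⁻¹' CC K lam = ∅ := by
      ext x
      exact ⟨fun h => absurd h.1 ht, fun h => absurd h (notMem_empty x)⟩
    simp [this]

lemma mem_comb (hconv : Convex ℝ K) {c₁ c₂ : ℝ} (h₁ : 0 ≤ c₁) (h₂ : 0 ≤ c₂)
    {u v : EuclideanSpace ℝ (Fin n)} (hu : u ∈ c₁ • K) (hv : v ∈ c₂ • K) :
    u + v ∈ (c₁ + c₂) • K := by
  rw [hconv.add_smul h₁ h₂]; exact add_mem_add hu hv

lemma comb_mem_SS (hconv : Convex ℝ K) (hlam : lam ∈ Icc (0:ℝ) 1)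
    {t s σ τ : ℝ} (ht : t ∈ Icc (0:ℝ) 1) (hs : s ∈ Icc (0:ℝ) 1)
    (hσ : 0 ≤ σ) (hτ : 0 ≤ τ) (hστ : σ + τ = 1)
    {x y : EuclideanSpace ℝ (Fin n)} (hx : x ∈ SS K lam t) (hy : y ∈ SS K lam s) :
    σ • x + τ • y ∈ SS K lam (σ*t + τ*s) := by
  obtain ⟨u₁, hu₁, v₁, hv₁, hxe⟩ := hx
  obtain ⟨u₂, hu₂, v₂, hv₂, hye⟩ := hy
  have hKneg : Convex ℝ (-K) := hconv.neg
  have h1n : 0 ≤ 1 - lam := by linarith [hlam.2]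
  have hu : σ • u₁ + τ • u₂ ∈ ((1-(σ*t+τ*s))*(1-lam)) • K := by
    have e1 : σ • u₁ ∈ (σ * ((1-t)*(1-lam))) • K := by
      obtain ⟨p, hp, rfl⟩ := hu₁
      exact ⟨p, hp, (smul_smul _ _ _).symm⟩
    have e2 : τ • u₂ ∈ (τ * ((1-s)*(1-lam))) • K := by
      obtain ⟨p, hp, rfl⟩ := hu₂
      exact ⟨p, hp, (smul_smul _ _ _).symm⟩
    have := mem_comb hconv (mul_nonneg hσ (mul_nonneg (by linarith [ht.2]) h1n))
      (mul_nonneg hτ (mul_nonneg (by linarith [hs.2]) h1n)) e1 e2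
    have hc : σ * ((1-t)*(1-lam)) + τ * ((1-s)*(1-lam)) = (1-(σ*t+τ*s))*(1-lam) := by
      linear_combination (1 - lam) * hστ
    rwa [hc] at this
  have hv : σ • v₁ + τ • v₂ ∈ ((σ*t+τ*s)*lam) • (-K) := by
    have e1 : σ • v₁ ∈ (σ * (t*lam)) • (-K) := by
      obtain ⟨p, hp, rfl⟩ := hv₁
      exact ⟨p, hp, (smul_smul _ _ _).symm⟩
    have e2 : τ • v₂ ∈ (τ * (s*lam)) • (-K) := by
      obtain ⟨p, hp, rfl⟩ := hv₂
      exact ⟨p, hp, (smul_smul _ _ _).symm⟩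
    have := mem_comb hKneg (mul_nonneg hσ (mul_nonneg ht.1 hlam.1))
      (mul_nonneg hτ (mul_nonneg hs.1 hlam.1)) e1 e2
    have hc : σ * (t*lam) + τ * (s*lam) = (σ*t+τ*s)*lam := by ring
    rwa [hc] at this
  have : (σ • u₁ + τ • u₂) + (σ • v₁ + τ • v₂) ∈ SS K lam (σ*t + τ*s) :=
    add_mem_add hu hv
  have heq : (σ • u₁ + τ • u₂) + (σ • v₁ + τ • v₂) = σ • x + τ • y := by
    rw [← hxe, ← hye]
    simp only [smul_add]
    abel
  rwa [heq] at this

lemma convex_CC (hconv : Convex ℝ K) (hlam : lam ∈ Icc (0:ℝ) 1) :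
    Convex ℝ (CC K lam) := by
  rintro ⟨t, x⟩ ⟨ht, hx⟩ ⟨s, y⟩ ⟨hs, hy⟩ σ τ hσ hτ hστ
  refine ⟨?_, ?_⟩
  · exact (convex_Icc (0:ℝ) 1) ht hs hσ hτ hστ
  · exact comb_mem_SS hconv hlam ht hs hσ hτ hστ hx hy

def MM (K : Set (EuclideanSpace ℝ (Fin n))) (lam : ℝ) :
    Set ((ℝ × EuclideanSpace ℝ (Fin n)) × EuclideanSpace ℝ (Fin n)) :=
  {w | w.1.1 ∈ Icc (0:ℝ) 1 ∧ w.2 ∈ ((1-w.1.1)*(1-lam)) • K ∧ w.2 - w.1.2 ∈ (w.1.1*lam) • K}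

lemma measurableSet_MM (hK : IsCompact K) : MeasurableSet (MM K lam) := by
  have h1 : IsCompact {p : ℝ × EuclideanSpace ℝ (Fin n) |
      p.1 ∈ Icc (0:ℝ) 1 ∧ p.2 ∈ ((1-p.1)*(1-lam)) • K} :=
    isCompact_scaled_graph (f := fun t => (1-t)*(1-lam)) hK (by fun_prop)
  have h2 : IsCompact {p : ℝ × EuclideanSpace ℝ (Fin n) |
      p.1 ∈ Icc (0:ℝ) 1 ∧ p.2 ∈ (p.1*lam) • K} :=
    isCompact_scaled_graph (f := fun t => t*lam) hK (by fun_prop)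
  have hMM : MM K lam =
      ((fun w : (ℝ × EuclideanSpace ℝ (Fin n)) × EuclideanSpace ℝ (Fin n) => (w.1.1, w.2)) ⁻¹'
        {p : ℝ × EuclideanSpace ℝ (Fin n) | p.1 ∈ Icc (0:ℝ) 1 ∧ p.2 ∈ ((1-p.1)*(1-lam)) • K})
      ∩ ((fun w : (ℝ × EuclideanSpace ℝ (Fin n)) × EuclideanSpace ℝ (Fin n) =>
            (w.1.1, w.2 - w.1.2)) ⁻¹'
        {p : ℝ × EuclideanSpace ℝ (Fin n) | p.1 ∈ Icc (0:ℝ) 1 ∧ p.2 ∈ (p.1*lam) • K}) := by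
    ext w
    simp only [MM, mem_setOf_eq, mem_inter_iff, mem_preimage]
    tauto
  rw [hMM]
  exact ((h1.isClosed.preimage (by fun_prop)).measurableSet).inter
    ((h2.isClosed.preimage (by fun_prop)).measurableSet)

def HH (K : Set (EuclideanSpace ℝ (Fin n))) (lam : ℝ) (z : ℝ × EuclideanSpace ℝ (Fin n)) :
    ENNReal :=
  volume (Prod.mk z ⁻¹' MM K lam)

lemma measurable_HH (hK : IsCompact K) : Measurable (HH K lam) :=
  measurable_measure_prodMk_left (measurableSet_MM hK)

lemma covariogram (A B : Set (EuclideanSpace ℝ (Fin n))) (hA : MeasurableSet A)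
    (hB : MeasurableSet B) :
    ∫⁻ x, volume {y | y ∈ A ∧ y - x ∈ B} = volume A * volume B := by
  set W : Set (EuclideanSpace ℝ (Fin n) × EuclideanSpace ℝ (Fin n)) :=
    {p | p.2 ∈ A ∧ p.2 - p.1 ∈ B} with hWdef
  have hW : MeasurableSet W :=
    (measurable_snd hA).inter ((measurable_snd.sub measurable_fst) hB)
  have h1 : ∀ x, {y | y ∈ A ∧ y - x ∈ B} = Prod.mk x ⁻¹' W := by
    intro x; rfl
  calc ∫⁻ x, volume {y | y ∈ A ∧ y - x ∈ B}
      = ∫⁻ x, volume (Prod.mk x ⁻¹' W) := by simp_rw [h1]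
    _ = (volume.prod volume) W := (Measure.prod_apply hW).symm
    _ = ∫⁻ y, volume ((fun x => (x, y)) ⁻¹' W) := Measure.prod_apply_symm hW
    _ = ∫⁻ y, A.indicator (fun _ => volume B) y := by
        congr 1
        funext y
        by_cases hy : y ∈ A
        · have : ((fun x => (x, y)) ⁻¹' W) = {x | y - x ∈ B} := by
            ext x; simp [hWdef, hy]
          rw [this, indicator_of_mem hy]
          have h2 : {x | y - x ∈ B} = y +ᵥ (-B) := by
            ext x
            simp only [Set.mem_setOf_eq, Set.mem_vadd_set, Set.mem_neg, vadd_eq_add]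
            constructor
            · intro h; exact ⟨x - y, by simpa using h, by abel⟩
            · rintro ⟨b, hb, rfl⟩; simpa using hb
          rw [h2, measure_vadd, Measure.measure_neg]
        · have : ((fun x => (x, y)) ⁻¹' W) = ∅ := by
            ext x; simp [hWdef, hy]
          rw [this, indicator_of_notMem hy, measure_empty]
    _ = volume B * volume A := lintegral_indicator_const hA _
    _ = volume A * volume B := mul_comm _ _

lemma lintegral_HH (hK : IsCompact K) (hlam : lam ∈ Icc (0:ℝ) 1) :
    ∫⁻ z, HH K lam z
      = ENNReal.ofReal ((lam*(1-lam))^n) * (volume K * volume K)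
        * ∫⁻ t in Icc (0:ℝ) 1, ENNReal.ofReal ((t*(1-t))^n) := by
  have hMM := measurableSet_MM (lam := lam) hK
  have hKm := hK.measurableSet
  calc ∫⁻ z, HH K lam z
      = ∫⁻ t, ∫⁻ x, HH K lam (t, x) := by
        rw [Measure.volume_eq_prod, lintegral_prod _ ((measurable_HH hK).aemeasurable)]
    _ = ∫⁻ t, (Icc (0:ℝ) 1).indicator
          (fun t => ENNReal.ofReal ((lam*(1-lam))^n)
            * (volume K * volume K) * ENNReal.ofReal ((t*(1-t))^n)) t := by
        congr 1
        funext t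
        by_cases ht : t ∈ Icc (0:ℝ) 1
        · rw [indicator_of_mem ht]
          have hsl : ∀ x : EuclideanSpace ℝ (Fin n), Prod.mk (t, x) ⁻¹' MM K lam
              = {y | y ∈ ((1-t)*(1-lam)) • K ∧ y - x ∈ (t*lam) • K} := by
            intro x
            ext y
            simp only [MM, mem_preimage, mem_setOf_eq]
            exact ⟨fun h => ⟨h.2.1, h.2.2⟩, fun h => ⟨ht, h.1, h.2⟩⟩
          have hca : (0:ℝ) ≤ (1-t)*(1-lam) :=
            mul_nonneg (by linarith [ht.2]) (by linarith [hlam.2])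
          have hcb : (0:ℝ) ≤ t*lam := mul_nonneg ht.1 hlam.1
          have hA : MeasurableSet (((1-t)*(1-lam)) • K) := by
            rw [← Set.image_smul]
            exact (hK.image (continuous_const_smul _)).measurableSet
          have hB : MeasurableSet ((t*lam) • K) := by
            rw [← Set.image_smul]
            exact (hK.image (continuous_const_smul _)).measurableSet
          simp_rw [HH, hsl]
          rw [covariogram _ _ hA hB,
            Measure.addHaar_smul_of_nonneg volume hca K,
            Measure.addHaar_smul_of_nonneg volume hcb K,
            finrank_euclideanSpace_fin]
          have hpr : ((1-t)*(1-lam))^n * ((t*lam))^n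
              = (lam*(1-lam))^n * (t*(1-t))^n := by
            rw [← mul_pow, ← mul_pow]
            congr 1
            ring
          calc (ENNReal.ofReal (((1-t)*(1-lam))^n) * volume K)
                * (ENNReal.ofReal ((t*lam)^n) * volume K)
              = ENNReal.ofReal (((1-t)*(1-lam))^n) * ENNReal.ofReal ((t*lam)^n)
                * (volume K * volume K) := by ring
            _ = ENNReal.ofReal ((lam*(1-lam))^n) * ENNReal.ofReal ((t*(1-t))^n)
                * (volume K * volume K) := by
                rw [← ENNReal.ofReal_mul (pow_nonneg hca n), hpr,
                  ENNReal.ofReal_mul (pow_nonneg (mul_nonneg hlam.1 (by linarith [hlam.2])) n)]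
            _ = ENNReal.ofReal ((lam*(1-lam))^n) * (volume K * volume K)
                * ENNReal.ofReal ((t*(1-t))^n) := by ring
        · rw [indicator_of_notMem ht]
          have : ∀ x : EuclideanSpace ℝ (Fin n), Prod.mk (t, x) ⁻¹' MM K lam = ∅ := by
            intro x
            ext y
            exact ⟨fun h => absurd h.1 ht, fun h => absurd h (notMem_empty y)⟩
          simp [HH, this]
    _ = _ := by
        rw [lintegral_indicator measurableSet_Icc,
          lintegral_const_mul _ (by fun_prop : Measurable fun t : ℝ =>
            ENNReal.ofReal ((t*(1-t))^n))]

/-- The distinguished point of `CC`. -/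
def zz (n : ℕ) (lam : ℝ) : ℝ × EuclideanSpace ℝ (Fin n) := (1 - lam, 0)

/-- Key pointwise lower bound for `HH` along segments from `zz`. -/
lemma key_lower (hK : IsCompact K) (hconv : Convex ℝ K) (hlam : lam ∈ Icc (0:ℝ) 1)
    {ρ : ℝ} (hρ0 : 0 ≤ ρ) (hρ1 : ρ ≤ 1)
    {w : ℝ × EuclideanSpace ℝ (Fin n)} (hw : w ∈ CC K lam) :
    ENNReal.ofReal (((1-ρ)*(lam*(1-lam)))^n) * volume K
      ≤ HH K lam (zz n lam + ρ • (w - zz n lam)) := by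
  obtain ⟨s, ξ⟩ := w
  obtain ⟨hs, hξ⟩ := hw
  dsimp only at hs hξ
  obtain ⟨u, hu, v', hv', hξe⟩ := hξ
  dsimp only at hξe
  -- `v := u` is the witness in `a_s • K`, and `v - ξ = -v' ∈ b_s • K`
  have hvmem : u - ξ ∈ (s*lam) • K := by
    obtain ⟨m, hm, rfl⟩ := hv'
    have : u - ξ = (s*lam) • (-m) := by
      rw [← hξe]; rw [smul_neg]; abel
    rw [this]
    exact smul_mem_smul_set (by simpa using hm)
  set c : ℝ := (1-ρ)*(lam*(1-lam)) with hc
  set z : ℝ × EuclideanSpace ℝ (Fin n) := zz n lam + ρ • ((s, ξ) - zz n lam) with hzdef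
  have hz1 : z.1 = (1-ρ)*(1-lam) + ρ*s := by
    simp only [hzdef, zz, Prod.fst_add, Prod.smul_fst, Prod.fst_sub, smul_eq_mul]
    ring
  have hz2 : z.2 = ρ • ξ := by
    simp only [hzdef, zz, Prod.snd_add, Prod.smul_snd, Prod.snd_sub]
    rw [sub_zero, zero_add]
  have hcnn : 0 ≤ c := by
    have := hlam.1; have := hlam.2
    have h1 : 0 ≤ lam * (1 - lam) := mul_nonneg hlam.1 (by linarith)
    exact mul_nonneg (by linarith) h1
  have hsub : (ρ • u) +ᵥ (c • K) ⊆ Prod.mk z ⁻¹' MM K lam := by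
    intro y hy
    obtain ⟨x, hx, rfl⟩ := hy
    obtain ⟨p, hp, rfl⟩ := hx
    refine ⟨?_, ?_, ?_⟩
    · -- z.1 ∈ Icc 0 1
      rw [hz1]
      constructor
      · have : 0 ≤ (1-ρ)*(1-lam) := mul_nonneg (by linarith) (by linarith [hlam.2])
        have : 0 ≤ ρ*s := mul_nonneg hρ0 hs.1
        linarith
      · nlinarith [hs.2, hlam.1, hlam.2]
    · -- membership in ((1 - z.1)*(1-lam)) • K
      show (ρ • u) +ᵥ (c • p) ∈ _
      rw [vadd_eq_add]
      have h1 : c • p ∈ c • K := smul_mem_smul_set hp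
      have h2 : ρ • u ∈ (ρ * ((1-s)*(1-lam))) • K := by
        obtain ⟨q, hq, rfl⟩ := hu
        exact ⟨q, hq, (smul_smul _ _ _).symm⟩
      have h3 := mem_comb hconv hcnn
        (mul_nonneg hρ0 (mul_nonneg (by linarith [hs.2]) (by linarith [hlam.2]))) h1 h2
      have hcoef : c + ρ * ((1-s)*(1-lam)) = (1 - z.1)*(1-lam) := by
        rw [hz1, hc]; ring
      rw [add_comm (c • p) (ρ • u)] at h3
      rwa [hcoef] at h3
    · -- membership in (z.1 * lam) • K
      show ((ρ • u) +ᵥ (c • p)) - z.2 ∈ _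
      rw [vadd_eq_add, hz2]
      have heq2 : (ρ • u + c • p) - ρ • ξ = c • p + ρ • (u - ξ) := by
        rw [smul_sub]; abel
      rw [heq2]
      have h1 : c • p ∈ c • K := smul_mem_smul_set hp
      have h2 : ρ • (u - ξ) ∈ (ρ * (s*lam)) • K := by
        obtain ⟨q, hq, hqe⟩ := hvmem
        exact ⟨q, hq, by rw [← hqe, smul_smul]⟩
      have h3 := mem_comb hconv hcnn (mul_nonneg hρ0 (mul_nonneg hs.1 hlam.1)) h1 h2
      have hcoef : c + ρ * (s*lam) = z.1 * lam := by
        rw [hz1, hc]; ring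
      rwa [hcoef] at h3
  calc ENNReal.ofReal (((1-ρ)*(lam*(1-lam)))^n) * volume K
      = volume ((ρ • u) +ᵥ (c • K)) := by
        rw [measure_vadd, Measure.addHaar_smul_of_nonneg volume hcnn,
          finrank_euclideanSpace_fin]
    _ ≤ HH K lam z := measure_mono hsub

/-- Shifted copy of `CC` with the distinguished point at the origin. -/
def S₀ (K : Set (EuclideanSpace ℝ (Fin n))) (lam : ℝ) : Set (ℝ × EuclideanSpace ℝ (Fin n)) :=
  (fun w => w - zz n lam) '' CC K lam

/-- Contracted copies of `CC` towards the distinguished point. -/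
def DD (K : Set (EuclideanSpace ℝ (Fin n))) (lam : ℝ) (r : ℝ) :
    Set (ℝ × EuclideanSpace ℝ (Fin n)) :=
  zz n lam +ᵥ (r • S₀ K lam)

lemma S₀_eq_vadd : S₀ K lam = (-(zz n lam)) +ᵥ CC K lam := by
  ext z
  simp only [S₀, mem_image, Set.mem_vadd_set, vadd_eq_add]
  constructor
  · rintro ⟨w, hw, rfl⟩; exact ⟨w, hw, by abel⟩
  · rintro ⟨w, hw, rfl⟩; exact ⟨w, hw, by abel⟩

lemma isCompact_S₀ (hK : IsCompact K) : IsCompact (S₀ K lam) :=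
  (isCompact_CC hK).image (continuous_id.sub continuous_const)

lemma zero_mem_S₀ (hne : K.Nonempty) (hlam : lam ∈ Icc (0:ℝ) 1) : (0:ℝ × EuclideanSpace ℝ (Fin n)) ∈ S₀ K lam :=
  ⟨zz n lam, z₀_mem_CC hne hlam, sub_self _⟩

lemma convex_S₀ (hconv : Convex ℝ K) (hlam : lam ∈ Icc (0:ℝ) 1) : Convex ℝ (S₀ K lam) := by
  rw [S₀_eq_vadd]
  have := (convex_CC hconv hlam).translate (-(zz n lam))
  exact (convex_CC hconv hlam).vadd _

lemma mem_DD_iff {r : ℝ} {z : ℝ × EuclideanSpace ℝ (Fin n)} :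
    z ∈ DD K lam r ↔ z - zz n lam ∈ r • S₀ K lam := by
  simp only [DD, Set.mem_vadd_set, vadd_eq_add]
  constructor
  · rintro ⟨y, hy, rfl⟩; simpa using hy
  · intro h; exact ⟨z - zz n lam, h, by abel⟩

lemma DD_mono (hK : IsCompact K) (hconv : Convex ℝ K) (hne : K.Nonempty)
    (hlam : lam ∈ Icc (0:ℝ) 1) {r r' : ℝ} (hr : 0 ≤ r) (hrr : r ≤ r') :
    DD K lam r ⊆ DD K lam r' := by
  have hsub : r • S₀ K lam ⊆ r' • S₀ K lam := by
    intro x hx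
    obtain ⟨y, hy, rfl⟩ := hx
    rcases eq_or_lt_of_le (hr.trans hrr) with h0 | h0
    · have hre : r = 0 := le_antisymm (by linarith) hr
      rw [hre, ← h0]
      exact smul_mem_smul_set hy
    · have hmem : (r / r') • y ∈ S₀ K lam := by
        apply (convex_S₀ hconv hlam).smul_mem_of_zero_mem (zero_mem_S₀ hne hlam) hy
        constructor
        · exact div_nonneg hr h0.le
        · rw [div_le_one h0]; exact hrr
      refine ⟨(r / r') • y, hmem, ?_⟩
      show r' • (r / r') • y = r • y
      rw [smul_smul, mul_div_cancel₀ _ (ne_of_gt h0)]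
  intro z hz
  rw [mem_DD_iff] at hz ⊢
  exact hsub hz

open scoped Classical in
def rho (K : Set (EuclideanSpace ℝ (Fin n))) (lam : ℝ) (z : ℝ × EuclideanSpace ℝ (Fin n)) : ℝ :=
  if z ∈ CC K lam then sInf {r : ℝ | 0 ≤ r ∧ z ∈ DD K lam r} else 0

lemma DD_one : DD K lam 1 = CC K lam := by
  rw [DD, one_smul, S₀_eq_vadd, vadd_vadd]
  simp

lemma rho_nonneg (z : ℝ × EuclideanSpace ℝ (Fin n)) : 0 ≤ rho K lam z := by
  rw [rho]
  split_ifs with hz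
  · exact le_csInf ⟨1, zero_le_one, DD_one ▸ hz⟩ fun b hb => hb.1
  · exact le_refl 0

lemma rho_le_of_mem {z : ℝ × EuclideanSpace ℝ (Fin n)} (hz : z ∈ CC K lam) {r : ℝ}
    (hr : 0 ≤ r) (hmem : z ∈ DD K lam r) : rho K lam z ≤ r := by
  rw [rho, if_pos hz]
  exact csInf_le ⟨0, fun b hb => hb.1⟩ ⟨hr, hmem⟩

lemma rho_le_one {z : ℝ × EuclideanSpace ℝ (Fin n)} (hz : z ∈ CC K lam) :
    rho K lam z ≤ 1 :=
  rho_le_of_mem hz zero_le_one (DD_one ▸ hz)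

lemma mem_DD_of_rho_le (hK : IsCompact K) (hconv : Convex ℝ K) (hne : K.Nonempty)
    (hlam : lam ∈ Icc (0:ℝ) 1) {z : ℝ × EuclideanSpace ℝ (Fin n)} (hz : z ∈ CC K lam)
    {r : ℝ} (hr : 0 ≤ r) (hle : rho K lam z ≤ r) : z ∈ DD K lam r := by
  have hall : ∀ r', r < r' → z ∈ DD K lam r' := by
    intro r' hrr
    have hne' : {r : ℝ | 0 ≤ r ∧ z ∈ DD K lam r}.Nonempty := ⟨1, zero_le_one, DD_one ▸ hz⟩
    have hbdd : BddBelow {r : ℝ | 0 ≤ r ∧ z ∈ DD K lam r} := ⟨0, fun b hb => hb.1⟩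
    have hlt : sInf {r : ℝ | 0 ≤ r ∧ z ∈ DD K lam r} < r' := by
      rw [rho, if_pos hz] at hle
      exact lt_of_le_of_lt hle hrr
    obtain ⟨r₁, hr₁, hlt₁⟩ := (csInf_lt_iff hbdd hne').mp hlt
    exact DD_mono hK hconv hne hlam hr₁.1 hlt₁.le hr₁.2
  rw [mem_DD_iff]
  rcases hr.lt_or_eq with hpos | hzero
  · have hx : ∀ r', r < r' → r'⁻¹ • (z - zz n lam) ∈ S₀ K lam := by
      intro r' h
      obtain ⟨y, hy, hyy⟩ := (mem_DD_iff).mp (hall r' h)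
      have hr' : (0:ℝ) < r' := lt_trans hpos h
      have : r'⁻¹ • (z - zz n lam) = y := by
        rw [← hyy]
        show r'⁻¹ • r' • y = y
        rw [smul_smul, inv_mul_cancel₀ hr'.ne', one_smul]
      rw [this]; exact hy
    have hcl : IsClosed (S₀ K lam) := (isCompact_S₀ hK).isClosed
    have htend : Filter.Tendsto (fun r' : ℝ => r'⁻¹ • (z - zz n lam)) (nhdsWithin r (Ioi r))
        (nhds (r⁻¹ • (z - zz n lam))) := by
      apply Filter.Tendsto.mono_left _ nhdsWithin_le_nhds
      exact ((continuousAt_inv₀ hpos.ne').smul continuousAt_const)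
    have hev : ∀ᶠ r' in nhdsWithin r (Ioi r), r'⁻¹ • (z - zz n lam) ∈ S₀ K lam :=
      eventually_nhdsWithin_of_forall (fun r' hr' => hx r' hr')
    have hmem := hcl.mem_of_tendsto htend hev
    exact ⟨r⁻¹ • (z - zz n lam), hmem, by
      show r • r⁻¹ • (z - zz n lam) = z - zz n lam
      rw [smul_smul, mul_inv_cancel₀ hpos.ne', one_smul]⟩
  · obtain ⟨R, hR⟩ := isBounded_iff_forall_norm_le.mp (isCompact_S₀ (lam := lam) hK).isBounded
    have hR0 : 0 ≤ R := le_trans (norm_nonneg _) (hR 0 (zero_mem_S₀ hne hlam))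
    have hqn : ∀ ε : ℝ, 0 < ε → ‖z - zz n lam‖ ≤ ε * R := by
      intro ε hε
      obtain ⟨y, hy, hyy⟩ := (mem_DD_iff).mp (hall ε (by linarith [hzero]))
      have : z - zz n lam = ε • y := hyy.symm
      rw [this, norm_smul]
      simp only [Real.norm_eq_abs, abs_of_pos hε]
      exact mul_le_mul_of_nonneg_left (hR y hy) hε.le
    have hq0 : ‖z - zz n lam‖ = 0 := by
      by_contra hq
      have hqpos : 0 < ‖z - zz n lam‖ := lt_of_le_of_ne (norm_nonneg _) (Ne.symm hq)
      have h2 := hqn (‖z - zz n lam‖ / (2 * (R + 1))) (by positivity)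
      have hpos2 : (0:ℝ) < 2*(R+1) := by linarith
      rw [div_mul_eq_mul_div, le_div_iff₀ hpos2] at h2
      nlinarith [mul_nonneg hR0 hqpos.le]
    have : z - zz n lam = 0 := norm_eq_zero.mp hq0
    rw [this, ← hzero]
    exact ⟨0, zero_mem_S₀ hne hlam, smul_zero _⟩

lemma isCompact_DD (hK : IsCompact K) (r : ℝ) : IsCompact (DD K lam r) := by
  rw [DD, ← Set.image_vadd, ← Set.image_smul]
  exact (((isCompact_S₀ hK).image (continuous_const_smul _)).image (continuous_const_vadd _))

lemma measurable_rho (hK : IsCompact K) (hconv : Convex ℝ K) (hne : K.Nonempty)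
    (hlam : lam ∈ Icc (0:ℝ) 1) : Measurable (rho K lam) := by
  apply measurable_of_Iic
  intro c
  rcases lt_or_ge c 0 with hc | hc
  · have : rho K lam ⁻¹' Iic c = ∅ := by
      ext z
      simp only [mem_preimage, mem_Iic, mem_empty_iff_false, iff_false, not_le]
      exact lt_of_lt_of_le hc (rho_nonneg z)
    rw [this]; exact MeasurableSet.empty
  · have hset : rho K lam ⁻¹' Iic c = (CC K lam)ᶜ ∪ (CC K lam ∩ DD K lam (min c 1)) := by
      ext z
      simp only [mem_preimage, mem_Iic, mem_union, mem_compl_iff, mem_inter_iff]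
      constructor
      · intro h
        by_cases hz : z ∈ CC K lam
        · exact Or.inr ⟨hz, mem_DD_of_rho_le hK hconv hne hlam hz (le_min hc zero_le_one)
            (le_min h (rho_le_one hz))⟩
        · exact Or.inl hz
      · rintro (hz | ⟨hz, hd⟩)
        · rw [rho, if_neg hz]; exact hc
        · exact (rho_le_of_mem hz (le_min hc zero_le_one) hd).trans (min_le_left _ _)
    rw [hset]
    exact ((measurableSet_CC hK).compl).union
      ((measurableSet_CC hK).inter (isCompact_DD hK _).measurableSet)

lemma haarP : Measure.IsAddHaarMeasure (volume : Measure (ℝ × EuclideanSpace ℝ (Fin n))) := by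
  rw [Measure.volume_eq_prod]; infer_instance

lemma volume_DD (hr : (0:ℝ) ≤ r) :
    volume (DD K lam r) = ENNReal.ofReal (r^(1+n)) * volume (CC K lam) := by
  haveI := haarP (n := n)
  have hfr : Module.finrank ℝ (ℝ × EuclideanSpace ℝ (Fin n)) = 1 + n := by
    simp [finrank_euclideanSpace_fin]
  rw [DD, measure_vadd, Measure.addHaar_smul_of_nonneg volume hr, hfr, S₀_eq_vadd, measure_vadd]

lemma DD_subset_CC (hK : IsCompact K) (hconv : Convex ℝ K) (hne : K.Nonempty)
    (hlam : lam ∈ Icc (0:ℝ) 1) {r : ℝ} (hr : 0 ≤ r) (hr1 : r ≤ 1) :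
    DD K lam r ⊆ CC K lam := by
  rw [← DD_one (K := K) (lam := lam)]
  exact DD_mono hK hconv hne hlam hr hr1

lemma map_rho_eq (hK : IsCompact K) (hconv : Convex ℝ K) (hne : K.Nonempty)
    (hlam : lam ∈ Icc (0:ℝ) 1) :
    Measure.map (rho K lam) (volume.restrict (CC K lam))
      = (volume (CC K lam))
          • ((volume.restrict (Icc (0:ℝ) 1)).withDensity fun u => ENNReal.ofReal ((1+n) * u^n)) := by
  have hC := measurableSet_CC (lam := lam) hK
  have hrho := measurable_rho hK hconv hne hlam
  haveI : IsFiniteMeasure (volume.restrict (CC K lam)) := by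
    constructor
    rw [Measure.restrict_apply_univ]
    exact (isCompact_CC hK).measure_lt_top
  haveI : IsFiniteMeasure (Measure.map (rho K lam) (volume.restrict (CC K lam))) := by
    constructor
    rw [Measure.map_apply hrho MeasurableSet.univ]
    exact lt_of_le_of_lt (measure_mono (subset_univ _))
      (by rw [Measure.restrict_apply_univ]; exact (isCompact_CC hK).measure_lt_top)
  apply Measure.ext_of_Iic
  intro r
  rw [Measure.map_apply hrho measurableSet_Iic, Measure.restrict_apply (hrho measurableSet_Iic)]
  rw [Measure.smul_apply, withDensity_apply _ measurableSet_Iic,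
    Measure.restrict_restrict measurableSet_Iic]
  rcases lt_or_ge r 0 with hr | hr
  · have h1 : rho K lam ⁻¹' Iic r ∩ CC K lam = ∅ := by
      ext z
      simp only [mem_inter_iff, mem_preimage, mem_Iic, mem_empty_iff_false, iff_false, not_and]
      intro hz
      exact absurd (hz.trans_lt hr) (not_lt.mpr (rho_nonneg z))
    have h2 : Iic r ∩ Icc (0:ℝ) 1 = ∅ := by
      apply eq_empty_of_forall_notMem
      rintro u ⟨hu1, hu2, -⟩
      exact absurd (hu2.trans hu1) (not_le.mpr hr)
    rw [h1, h2]
    simp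
  · set m := min r 1 with hm
    have hm0 : 0 ≤ m := le_min hr zero_le_one
    have hm1 : m ≤ 1 := min_le_right _ _
    have h1 : rho K lam ⁻¹' Iic r ∩ CC K lam = DD K lam m := by
      ext z
      simp only [mem_inter_iff, mem_preimage, mem_Iic]
      constructor
      · rintro ⟨hzr, hz⟩
        exact mem_DD_of_rho_le hK hconv hne hlam hz hm0 (le_min hzr (rho_le_one hz))
      · intro hz
        have hzC : z ∈ CC K lam := DD_subset_CC hK hconv hne hlam hm0 hm1 hz
        exact ⟨(rho_le_of_mem hzC hm0 hz).trans ((min_le_left _ _)), hzC⟩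
    have h2 : Iic r ∩ Icc (0:ℝ) 1 = Icc (0:ℝ) m := by
      ext u
      simp only [mem_inter_iff, mem_Iic, mem_Icc, le_min_iff, hm]
      tauto
    rw [h1, h2, volume_DD hm0, lintegral_pow_Icc n hm0, smul_eq_mul, mul_comm]

lemma beta_ne_zero : (∫⁻ t in Icc (0:ℝ) 1, ENNReal.ofReal ((t*(1-t))^n)) ≠ 0 := by
  have hsub : volume.restrict (Icc (1/4:ℝ) (1/2)) ≤ volume.restrict (Icc (0:ℝ) 1) :=
    Measure.restrict_mono (Icc_subset_Icc (by norm_num) (by norm_num)) le_rfl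
  have h1 : ∫⁻ t in Icc (1/4:ℝ) (1/2), ENNReal.ofReal ((t*(1-t))^n)
      ≤ ∫⁻ t in Icc (0:ℝ) 1, ENNReal.ofReal ((t*(1-t))^n) := lintegral_mono' hsub le_rfl
  have h2 : ENNReal.ofReal ((1/8:ℝ)^n) * volume (Icc (1/4:ℝ) (1/2))
      ≤ ∫⁻ t in Icc (1/4:ℝ) (1/2), ENNReal.ofReal ((t*(1-t))^n) := by
    rw [← setLIntegral_const]
    apply lintegral_mono_ae
    filter_upwards [ae_restrict_mem measurableSet_Icc] with t ht
    apply ENNReal.ofReal_le_ofReal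
    apply pow_le_pow_left₀ (by norm_num)
    nlinarith [ht.1, ht.2]
  intro h0
  rw [h0] at h1
  have := le_antisymm (h2.trans h1) zero_le
  rw [Real.volume_Icc, mul_eq_zero] at this
  rcases this with h | h
  · rw [ENNReal.ofReal_eq_zero] at h
    have hp : (0:ℝ) < (1/8)^n := by positivity
    linarith
  · rw [ENNReal.ofReal_eq_zero] at h; norm_num at h

lemma beta_ne_top : (∫⁻ t in Icc (0:ℝ) 1, ENNReal.ofReal ((t*(1-t))^n)) ≠ ⊤ := by
  have : ∫⁻ t in Icc (0:ℝ) 1, ENNReal.ofReal ((t*(1-t))^n)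
      ≤ ∫⁻ _ in Icc (0:ℝ) 1, (1:ENNReal) := by
    apply lintegral_mono_ae
    filter_upwards [ae_restrict_mem measurableSet_Icc] with t ht
    rw [← ENNReal.ofReal_one]
    apply ENNReal.ofReal_le_ofReal
    apply pow_le_one₀ (mul_nonneg ht.1 (by linarith [ht.2]))
    nlinarith [ht.1, ht.2]
  refine ne_top_of_le_ne_top ?_ this
  simp [Real.volume_Icc]

lemma main_case (hK : IsCompact K) (hconv : Convex ℝ K) (hint : (interior K).Nonempty)
    (h0 : 0 < lam) (h1 : lam < 1) :
    ∫⁻ t in Icc (0:ℝ) 1, volume (SS K lam t) ≤ volume K / ((n : ENNReal) + 1) := by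
  have hlam : lam ∈ Icc (0:ℝ) 1 := ⟨h0.le, h1.le⟩
  have hne : K.Nonempty := hint.mono interior_subset
  have hC := measurableSet_CC (lam := lam) hK
  have hrho := measurable_rho hK hconv hne hlam
  set β := ∫⁻ t in Icc (0:ℝ) 1, ENNReal.ofReal ((t*(1-t))^n) with hβ
  set c := ENNReal.ofReal ((lam*(1-lam))^n) with hc
  have hA : ∫⁻ z, HH K lam z = c * (volume K * volume K) * β := lintegral_HH hK hlam
  -- pointwise lower bound on CC
  have hpoint : ∀ z ∈ CC K lam,
      c * volume K * ENNReal.ofReal ((1 - rho K lam z)^n) ≤ HH K lam z := by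
    intro z hz
    have hmem := mem_DD_of_rho_le hK hconv hne hlam hz (rho_nonneg z) le_rfl
    rw [mem_DD_iff] at hmem
    obtain ⟨y, hy, hyy⟩ := hmem
    obtain ⟨w, hw, rfl⟩ := hy
    have hyy' : rho K lam z • (w - zz n lam) = z - zz n lam := hyy
    have hzeq : zz n lam + rho K lam z • (w - zz n lam) = z := by
      rw [hyy']; abel
    have hkey := key_lower hK hconv hlam (rho_nonneg z) (rho_le_one hz) hw
    rw [hzeq] at hkey
    refine le_trans (le_of_eq ?_) hkey
    have hpow : ((1 - rho K lam z)*(lam*(1-lam)))^n = (lam*(1-lam))^n * (1 - rho K lam z)^n := by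
      rw [mul_pow]; ring
    rw [hpow, ENNReal.ofReal_mul (pow_nonneg (mul_nonneg hlam.1 (by linarith [hlam.2])) n), ← hc]
    ring
  have hmeasf : Measurable fun z => ENNReal.ofReal ((1 - rho K lam z)^n) :=
    ((measurable_const.sub hrho).pow_const n).ennreal_ofReal
  have hmeasg : Measurable fun r : ℝ => ENNReal.ofReal ((1 - r)^n) := by fun_prop
  have hmeasd : Measurable fun u : ℝ => ENNReal.ofReal ((1+(n:ℝ)) * u^n) := by fun_prop
  -- lower bound chain
  have hlow : c * volume K * (volume (CC K lam) * (ENNReal.ofReal (1+(n:ℝ)) * β))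
      ≤ ∫⁻ z, HH K lam z := by
    have step1 : ∫⁻ z in CC K lam, c * volume K * ENNReal.ofReal ((1 - rho K lam z)^n)
        ≤ ∫⁻ z, HH K lam z := by
      have step0 : ∫⁻ z in CC K lam, HH K lam z ≤ ∫⁻ z, HH K lam z :=
        lintegral_mono' Measure.restrict_le_self le_rfl
      refine le_trans ?_ step0
      apply lintegral_mono_ae
      filter_upwards [ae_restrict_mem hC] with z hz using hpoint z hz
    have step2 : ∫⁻ z in CC K lam, c * volume K * ENNReal.ofReal ((1 - rho K lam z)^n)
        = c * volume K * ∫⁻ z in CC K lam, ENNReal.ofReal ((1 - rho K lam z)^n) :=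
      lintegral_const_mul _ hmeasf
    have step3 : ∫⁻ z in CC K lam, ENNReal.ofReal ((1 - rho K lam z)^n)
        = volume (CC K lam) * (ENNReal.ofReal (1+(n:ℝ)) * β) := by
      calc ∫⁻ z in CC K lam, ENNReal.ofReal ((1 - rho K lam z)^n)
          = ∫⁻ r, ENNReal.ofReal ((1 - r)^n)
              ∂(Measure.map (rho K lam) (volume.restrict (CC K lam))) :=
            (lintegral_map hmeasg hrho).symm
        _ = volume (CC K lam)
              * ∫⁻ r, ENNReal.ofReal ((1 - r)^n)
                  ∂((volume.restrict (Icc (0:ℝ) 1)).withDensity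
                      fun u => ENNReal.ofReal ((1+(n:ℝ)) * u^n)) := by
            rw [map_rho_eq hK hconv hne hlam, lintegral_smul_measure, smul_eq_mul]
        _ = volume (CC K lam)
              * ∫⁻ r in Icc (0:ℝ) 1,
                  ENNReal.ofReal ((1+(n:ℝ)) * r^n) * ENNReal.ofReal ((1 - r)^n) := by
            rw [lintegral_withDensity_eq_lintegral_mul _ hmeasd hmeasg]
            rfl
        _ = volume (CC K lam) * (ENNReal.ofReal (1+(n:ℝ)) * β) := by
            congr 1
            rw [hβ, ← lintegral_const_mul _ (by fun_prop : Measurable fun t : ℝ =>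
              ENNReal.ofReal ((t*(1-t))^n))]
            apply setLIntegral_congr_fun measurableSet_Icc
            intro r hr
            dsimp only
            rw [ENNReal.ofReal_mul (by positivity : (0:ℝ) ≤ 1+(n:ℝ)), mul_assoc,
              ← ENNReal.ofReal_mul (pow_nonneg hr.1 n), ← mul_pow]
    calc c * volume K * (volume (CC K lam) * (ENNReal.ofReal (1+(n:ℝ)) * β))
        = c * volume K * ∫⁻ z in CC K lam, ENNReal.ofReal ((1 - rho K lam z)^n) := by
          rw [step3]
      _ = ∫⁻ z in CC K lam, c * volume K * ENNReal.ofReal ((1 - rho K lam z)^n) := step2.symm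
      _ ≤ ∫⁻ z, HH K lam z := step1
  -- cancellation
  have hKpos : 0 < volume K :=
    lt_of_lt_of_le (isOpen_interior.measure_pos volume hint) (measure_mono interior_subset)
  have hKfin : volume K ≠ ⊤ := hK.measure_lt_top.ne
  have hc0 : c ≠ 0 := by
    rw [hc]
    simp only [ne_eq, ENNReal.ofReal_eq_zero, not_le]
    exact pow_pos (mul_pos h0 (by linarith)) n
  have hcfin : c ≠ ⊤ := ENNReal.ofReal_ne_top
  have hfac0 : c * volume K * β ≠ 0 := by
    simp only [ne_eq, mul_eq_zero, not_or]
    exact ⟨⟨hc0, hKpos.ne'⟩, beta_ne_zero⟩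
  have hfactop : c * volume K * β ≠ ⊤ :=
    ENNReal.mul_ne_top (ENNReal.mul_ne_top hcfin hKfin) beta_ne_top
  have hineq : (c * volume K * β) * (volume (CC K lam) * ENNReal.ofReal (1+(n:ℝ)))
      ≤ (c * volume K * β) * volume K := by
    calc (c * volume K * β) * (volume (CC K lam) * ENNReal.ofReal (1+(n:ℝ)))
        = c * volume K * (volume (CC K lam) * (ENNReal.ofReal (1+(n:ℝ)) * β)) := by ring
      _ ≤ ∫⁻ z, HH K lam z := hlow
      _ = c * (volume K * volume K) * β := hA
      _ = (c * volume K * β) * volume K := by ring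
  have hcancel : volume (CC K lam) * ENNReal.ofReal (1+(n:ℝ)) ≤ volume K :=
    (ENNReal.mul_le_mul_iff_right hfac0 hfactop).mp hineq
  rw [← volume_CC hK]
  rw [ENNReal.le_div_iff_mul_le (Or.inl (by simp)) (Or.inl (by simp))]
  rwa [ofReal_one_add_nat] at hcancel

lemma SS_eq (K : Set (EuclideanSpace ℝ (Fin n))) (lam η : ℝ) :
    (1 - η) • ((1 - lam) • K) + η • (lam • (-K)) = SS K lam η := by
  rw [SS, smul_smul, smul_smul]

lemma edge_eval {f : ℝ → ℝ} (hf : Continuous f) (hnn : ∀ η ∈ Icc (0:ℝ) 1, 0 ≤ f η)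
    (A : Set (EuclideanSpace ℝ (Fin n))) :
    ∫⁻ η in Icc (0:ℝ) 1, volume (f η • A)
      = (∫⁻ η in Icc (0:ℝ) 1, ENNReal.ofReal ((f η) ^ n)) * volume A := by
  rw [← lintegral_mul_const _ (by fun_prop : Measurable fun η : ℝ =>
    ENNReal.ofReal ((f η) ^ n))]
  apply setLIntegral_congr_fun measurableSet_Icc
  intro η hη
  dsimp only
  rw [Measure.addHaar_smul_of_nonneg volume (hnn η hη), finrank_euclideanSpace_fin]

end
end Godbersen

open Godbersen in
theorem godbersen_stmt1 (n : ℕ) (K : Set (EuclideanSpace ℝ (Fin n)))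
    (hK_compact : IsCompact K) (hK_conv : Convex ℝ K)
    (hK_int : (interior K).Nonempty)
    (lam : ℝ) (hlam : lam ∈ Set.Icc (0:ℝ) 1) :
    ∫⁻ η in Set.Icc (0:ℝ) 1,
        volume ((1 - η) • ((1 - lam) • K) + η • (lam • (-K)))
      ≤ volume K / (n + 1) := by
  have hne : K.Nonempty := hK_int.mono interior_subset
  rcases eq_or_lt_of_le hlam.1 with h0 | h0
  · -- lam = 0
    have hsimp : ∀ η : ℝ, (1 - η) • ((1 - lam) • K) + η • (lam • (-K)) = (1 - η) • K := by
      intro η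
      rw [← h0, sub_zero, one_smul, Set.zero_smul_set (hne.neg), ← Set.singleton_zero,
        Set.smul_set_singleton, smul_zero, Set.singleton_zero, add_zero]
    simp_rw [hsimp]
    rw [edge_eval (by continuity) (fun η hη => by linarith [hη.2]) K]
    have : ∫⁻ η in Set.Icc (0:ℝ) 1, ENNReal.ofReal ((1 - η) ^ n) = ((n : ENNReal) + 1)⁻¹ :=
      lintegral_one_sub_pow_Icc01 n
    rw [this, div_eq_mul_inv, mul_comm]
  rcases eq_or_lt_of_le hlam.2 with h1 | h1
  · -- lam = 1
    have hsimp : ∀ η : ℝ, (1 - η) • ((1 - lam) • K) + η • (lam • (-K)) = η • (-K) := by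
      intro η
      rw [h1, sub_self, one_smul, Set.zero_smul_set hne, ← Set.singleton_zero,
        Set.smul_set_singleton, smul_zero, Set.singleton_zero, zero_add]
    simp_rw [hsimp]
    rw [edge_eval (by continuity) (fun η hη => hη.1) (-K)]
    rw [lintegral_pow_Icc01 n, Measure.measure_neg, div_eq_mul_inv, mul_comm]
  · -- 0 < lam < 1
    simp_rw [SS_eq]
    exact main_case hK_compact hK_conv hK_int h0 h1
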